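/- arXiv:1808.03829 — 2 statements merged into one kernel-verified Lean document; each statement's English description precedes it below -/
import Mathlib

section
/- The continuous ranked probability score of the Weibull(α,β) cdf F at observation y ≥ 0 equals y(2F(y) − 1) − 2β·γ(1+1/α, (y/β)^α) + 2^{−1/α} β Γ(1+1/α). -/
open MeasureTheory ProbabilityTheory Real

lemma integrableOn_exp_neg_mul_rpow_aux {b p : ℝ} (hb : 0 < b) (hp : 0 < p) :
    IntegrableOn (fun x : ℝ => Real.exp (-b * x ^ p)) (Set.Ioi 0) := by
  have h1p : 0 < 1/p := by positivity
  have hf : IntegrableOn (fun y : ℝ => y ^ (1/p - 1) * Real.exp (-b * y)) (Set.Ioi 0) := by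
    have := integrableOn_rpow_mul_exp_neg_mul_rpow (s := 1/p - 1) (p := 1)
      (by linarith) one_pos hb
    simpa [Real.rpow_one] using this
  have h := (integrableOn_Ioi_comp_rpow_iff' (fun y : ℝ => y ^ (1/p - 1) * Real.exp (-b * y))
    hp.ne').mpr hf
  refine h.congr_fun (fun x hx => ?_) measurableSet_Ioi
  have hx0 : (0:ℝ) < x := hx
  beta_reduce
  rw [smul_eq_mul, ← Real.rpow_mul hx0.le, ← mul_assoc, ← Real.rpow_add hx0]
  have : p - 1 + p * (1/p - 1) = 0 := by field_simp; ring
  rw [this, Real.rpow_zero, one_mul]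

/-- Lower incomplete gamma function `γ(s,z) = ∫₀^z t^{s−1} e^{−t} dt`. -/
noncomputable def lowerIncGamma (s z : ℝ) : ℝ :=
  ∫ t in Set.Ioc (0 : ℝ) z, t ^ (s - 1) * Real.exp (-t)

/-- The CRPS of the Weibull(α,β) cdf `F` at an observation `y ≥ 0` equals
`y(2F(y) − 1) − 2β·γ(1+1/α, (y/β)^α) + 2^{−1/α} β Γ(1+1/α)`. -/
theorem crps_weibull (α β : ℝ) (hα : 0 < α) (hβ : 0 < β) (y : ℝ) (hy : 0 ≤ y)
    (F : ℝ → ℝ) (hF : F = fun t => if 0 ≤ t then 1 - Real.exp (-(t / β) ^ α) else 0) :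
    (∫ t : ℝ, (F t - Set.indicator (Set.Ici y) (fun _ => (1 : ℝ)) t) ^ 2) =
      y * (2 * F y - 1) - 2 * β * lowerIncGamma (1 + 1 / α) ((y / β) ^ α) +
        2 ^ (-(1 / α) : ℝ) * β * Real.Gamma (1 + 1 / α) := by
  have h1α : (0:ℝ) < 1/α := by positivity
  set g : ℝ → ℝ := fun t => (F t - Set.indicator (Set.Ici y) (fun _ => (1 : ℝ)) t) ^ 2 with hg
  set e1 : ℝ → ℝ := fun t => Real.exp (-(t / β) ^ α) with he1
  -- continuity facts
  have hu_cont : Continuous fun t : ℝ => (t / β) ^ α := by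
    rw [continuous_iff_continuousAt]
    intro x
    exact (Real.continuousAt_rpow_const _ _ (Or.inr hα.le)).comp
      ((continuous_id.div_const β).continuousAt)
  have he1_cont : Continuous e1 := Real.continuous_exp.comp hu_cont.neg
  -- pointwise description of g
  have hg_neg : ∀ t : ℝ, t < 0 → g t = 0 := by
    intro t ht
    have hnm : t ∉ Set.Ici y := by simp only [Set.mem_Ici, not_le]; linarith
    simp only [hg, hF, if_neg (not_le.2 ht), Set.indicator_of_notMem hnm, sub_zero]
    norm_num
  have hg_Ico : ∀ t ∈ Set.Ico 0 y, g t = (1 - e1 t) ^ 2 := by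
    intro t ht
    have hnm : t ∉ Set.Ici y := by simpa using not_le.2 ht.2
    simp only [hg, hF, if_pos ht.1, Set.indicator_of_notMem hnm, sub_zero, he1]
  have hg_Ici : ∀ t ∈ Set.Ici y, g t = e1 t ^ 2 := by
    intro t ht
    have h0t : (0:ℝ) ≤ t := le_trans hy ht
    simp only [hg, hF, if_pos h0t, Set.indicator_of_mem ht, he1]
    ring
  -- e1^2 as exp of scaled rpow
  set b : ℝ := 2 * β ^ (-α) with hb_def
  have hb : 0 < b := by positivity
  have he2_eq : ∀ t : ℝ, 0 ≤ t → e1 t ^ 2 = Real.exp (-b * t ^ α) := by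
    intro t ht
    rw [he1]
    simp only
    rw [sq, ← Real.exp_add]
    congr 1
    rw [Real.div_rpow ht hβ.le, hb_def, Real.rpow_neg hβ.le]
    ring
  -- primitive of incomplete gamma integrand
  set f : ℝ → ℝ := fun t => t ^ (1/α) * Real.exp (-t) with hf_def
  have hf_cont : Continuous f :=
    (Real.continuous_rpow_const h1α.le).mul (Real.continuous_exp.comp continuous_neg)
  set P : ℝ → ℝ := fun z => ∫ t in (0:ℝ)..z, f t with hP_def
  have hP_deriv : ∀ z : ℝ, HasDerivAt P (f z) z := fun z =>
    intervalIntegral.integral_hasDerivAt_right (hf_cont.intervalIntegrable _ _)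
      (hf_cont.stronglyMeasurableAtFilter _ _) hf_cont.continuousAt
  have hP_cont : Continuous P := continuous_iff_continuousAt.2 fun z => (hP_deriv z).continuousAt
  have hP_eq : ∀ z : ℝ, 0 ≤ z → lowerIncGamma (1 + 1/α) z = P z := by
    intro z hz
    simp only [lowerIncGamma, show (1:ℝ) + 1/α - 1 = 1/α from by ring]
    rw [← intervalIntegral.integral_of_le hz]
  set G : ℝ → ℝ := fun t => β * P ((t/β)^α) + t * e1 t with hG_def
  have hG_cont : Continuous G :=
    (continuous_const.mul (hP_cont.comp hu_cont)).add (continuous_id.mul he1_cont)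
  have hG_deriv : ∀ t ∈ Set.Ioo 0 y, HasDerivAt G (e1 t) t := by
    intro t ht
    have ht0 : (0:ℝ) < t := ht.1
    have htβ : 0 < t / β := div_pos ht0 hβ
    have hdiv : HasDerivAt (fun t : ℝ => t / β) β⁻¹ t := by
      simpa using (hasDerivAt_id t).div_const β
    have hu : HasDerivAt (fun t : ℝ => (t/β)^α) (β⁻¹ * α * (t/β)^(α-1)) t :=
      hdiv.rpow_const (Or.inl htβ.ne')
    have hPu : HasDerivAt (fun t : ℝ => P ((t/β)^α))
        (f ((t/β)^α) * (β⁻¹ * α * (t/β)^(α-1))) t := (hP_deriv _).comp t hu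
    have hexp : HasDerivAt e1
        (Real.exp (-(t/β)^α) * -(β⁻¹ * α * (t/β)^(α-1))) t := hu.neg.exp
    have hte : HasDerivAt (fun t : ℝ => t * e1 t)
        (1 * e1 t + t * (Real.exp (-(t/β)^α) * -(β⁻¹ * α * (t/β)^(α-1)))) t :=
      (hasDerivAt_id t).mul hexp
    have htot := (hPu.const_mul β).add hte
    convert htot using 1
    case e'_4 => rfl
    case e'_5 => rfl
    case e'_8 => rfl
    have hpow : ((t/β)^α)^(1/α) = t/β := by
      rw [← Real.rpow_mul htβ.le, mul_one_div_cancel hα.ne', Real.rpow_one]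
    rw [hf_def]
    simp only [he1]
    rw [hpow]
    field_simp
    ring
  have hz_nonneg : (0:ℝ) ≤ (y/β)^α := Real.rpow_nonneg (div_nonneg hy hβ.le) α
  have hG0 : G 0 = 0 := by
    simp only [hG_def, zero_div, Real.zero_rpow hα.ne', zero_mul, add_zero, hP_def,
      intervalIntegral.integral_same, mul_zero]
  have hGy : G y = β * lowerIncGamma (1 + 1/α) ((y/β)^α) + y * e1 y := by
    rw [hG_def]
    simp only
    rw [hP_eq _ hz_nonneg]
  have key1 : ∫ t in (0:ℝ)..y, e1 t
      = β * lowerIncGamma (1 + 1/α) ((y/β)^α) + y * e1 y := by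
    rw [intervalIntegral.integral_eq_sub_of_hasDeriv_right_of_le hy hG_cont.continuousOn
      (fun x hx => (hG_deriv x hx).hasDerivWithinAt) (he1_cont.intervalIntegrable 0 y),
      hGy, hG0, sub_zero]
  -- the tail integral
  have hInt2 : IntegrableOn (fun t : ℝ => Real.exp (-b * t ^ α)) (Set.Ioi 0) :=
    integrableOn_exp_neg_mul_rpow_aux hb hα
  have hInt2' : IntegrableOn (fun t : ℝ => e1 t ^ 2) (Set.Ioi 0) :=
    hInt2.congr_fun (fun t ht => (he2_eq t (le_of_lt ht)).symm) measurableSet_Ioi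
  have hval2 : ∫ t in Set.Ioi (0:ℝ), e1 t ^ 2
      = 2 ^ (-(1/α) : ℝ) * β * Real.Gamma (1 + 1/α) := by
    rw [setIntegral_congr_fun measurableSet_Ioi (fun t ht => he2_eq t (le_of_lt ht)),
      integral_exp_neg_mul_rpow hα hb, hb_def,
      Real.mul_rpow (by norm_num) (Real.rpow_nonneg hβ.le _), ← Real.rpow_mul hβ.le]
    have h1 : -α * (-1/α) = 1 := by field_simp
    have h2 : (-1 : ℝ)/α = -(1/α) := by ring
    rw [h1, Real.rpow_one, h2, add_comm (1/α) 1]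
  -- integrability of g on the pieces
  have hgint_Ico : IntegrableOn g (Set.Ico 0 y) := by
    have h1 : IntegrableOn (fun t : ℝ => (1 - e1 t) ^ 2) (Set.Ico 0 y) :=
      (((continuous_const.sub he1_cont).pow 2).integrableOn_Icc).mono_set Set.Ico_subset_Icc_self
    exact h1.congr_fun (fun t ht => (hg_Ico t ht).symm) measurableSet_Ico
  have hgint_Ici : IntegrableOn g (Set.Ici y) := by
    have h1 : IntegrableOn (fun t : ℝ => e1 t ^ 2) (Set.Ici y) := by
      rw [integrableOn_Ici_iff_integrableOn_Ioi]
      exact hInt2'.mono_set (Set.Ioi_subset_Ioi hy)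
    exact h1.congr_fun (fun t ht => (hg_Ici t ht).symm) measurableSet_Ici
  -- split the integral
  have hdisj : Disjoint (Set.Ico 0 y) (Set.Ici y) := by
    rw [Set.disjoint_left]
    rintro t ⟨_, h2⟩ h3
    exact (not_le.2 h2) h3
  have hsplit : (∫ t : ℝ, g t) = (∫ t in Set.Ico 0 y, g t) + ∫ t in Set.Ici y, g t := by
    rw [← setIntegral_union hdisj measurableSet_Ici hgint_Ico hgint_Ici,
      Set.Ico_union_Ici_eq_Ici hy]
    exact (setIntegral_eq_integral_of_forall_compl_eq_zero
      (fun x hx => hg_neg x (by simpa using hx))).symm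
  have hIco_val : ∫ t in Set.Ico 0 y, g t = ∫ t in (0:ℝ)..y, (1 - e1 t) ^ 2 := by
    rw [setIntegral_congr_fun measurableSet_Ico hg_Ico,
      setIntegral_congr_set Ico_ae_eq_Ioc, ← intervalIntegral.integral_of_le hy]
  have hdisj2 : Disjoint (Set.Ioc 0 y) (Set.Ioi y) := by
    rw [Set.disjoint_left]
    rintro t ⟨_, h2⟩ h3
    exact (not_le.2 h3) h2
  have hIci_val : ∫ t in Set.Ici y, g t
      = (∫ t in Set.Ioi (0:ℝ), e1 t ^ 2) - ∫ t in (0:ℝ)..y, e1 t ^ 2 := by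
    rw [setIntegral_congr_fun measurableSet_Ici hg_Ici, integral_Ici_eq_integral_Ioi]
    have hsplit2 : ∫ t in Set.Ioi (0:ℝ), e1 t ^ 2
        = (∫ t in Set.Ioc 0 y, e1 t ^ 2) + ∫ t in Set.Ioi y, e1 t ^ 2 := by
      rw [← Set.Ioc_union_Ioi_eq_Ioi hy]
      exact setIntegral_union hdisj2 measurableSet_Ioi
        (hInt2'.mono_set Set.Ioc_subset_Ioi_self) (hInt2'.mono_set (Set.Ioi_subset_Ioi hy))
    rw [intervalIntegral.integral_of_le hy]
    linarith [hsplit2]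
  -- expand the square
  have hIe1 : IntervalIntegrable e1 volume 0 y := he1_cont.intervalIntegrable 0 y
  have hIe2 : IntervalIntegrable (fun t => e1 t ^ 2) volume 0 y :=
    (he1_cont.pow 2).intervalIntegrable 0 y
  have hexpand : ∫ t in (0:ℝ)..y, (1 - e1 t) ^ 2
      = y - 2 * (∫ t in (0:ℝ)..y, e1 t) + ∫ t in (0:ℝ)..y, e1 t ^ 2 := by
    have hpt : ∀ t, (1 - e1 t) ^ 2 = 1 - 2 * e1 t + e1 t ^ 2 := fun t => by ring
    simp_rw [hpt]
    rw [intervalIntegral.integral_add (intervalIntegrable_const.sub (hIe1.const_mul 2)) hIe2,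
      intervalIntegral.integral_sub intervalIntegrable_const (hIe1.const_mul 2),
      intervalIntegral.integral_const, intervalIntegral.integral_const_mul]
    simp
  -- put everything together
  rw [hsplit, hIco_val, hIci_val, hexpand, key1, hval2, hF]
  simp only [if_pos hy, he1]
  ring
end

section
/- The continuous ranked probability score can be written as CRPS(F,y) = E_F|Y − y| − ½ E_F|Y − Y'|, where Y, Y' are i.i.d. with cdf F having finite first moment. -/
open MeasureTheory ProbabilityTheory Real
open scoped ENNReal

noncomputable def ind (a t : ℝ) : ℝ := if a ≤ t then 1 else 0

lemma ind_sq (a t : ℝ) : ind a t ^ 2 = ind a t := by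
  unfold ind; split <;> norm_num

lemma sq_diff_ind (a b t : ℝ) :
    (ind a t - ind b t) ^ 2
      = (Set.Ico (min a b) (max a b)).indicator (fun _ => (1 : ℝ)) t := by
  rw [Set.indicator_apply]
  unfold ind
  by_cases h1 : a ≤ t <;> by_cases h2 : b ≤ t <;>
    simp only [h1, h2, if_true, if_false] <;> (try push_neg at h1) <;> (try push_neg at h2)
  · rw [if_neg]; · norm_num
    simp only [Set.mem_Ico, not_and, not_lt, le_min_iff, max_le_iff]
    intro _; exact ⟨h1, h2⟩
  · rw [if_pos]; · norm_num
    simp only [Set.mem_Ico, le_min_iff, lt_max_iff]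
    exact ⟨le_trans (min_le_left _ _) h1, Or.inr h2⟩
  · rw [if_pos]; · norm_num
    simp only [Set.mem_Ico, le_min_iff, lt_max_iff]
    exact ⟨le_trans (min_le_right _ _) h2, Or.inl h1⟩
  · rw [if_neg]; · norm_num
    simp only [Set.mem_Ico, not_and, not_lt, min_le_iff]
    intro h; rcases h with h | h <;> linarith

lemma integral_sq_diff_ind (a b : ℝ) :
    ∫ t, (ind a t - ind b t) ^ 2 = |a - b| := by
  simp_rw [sq_diff_ind]
  rw [MeasureTheory.integral_indicator measurableSet_Ico]
  simp [Real.volume_Ico, ENNReal.toReal_ofReal (sub_nonneg.mpr (min_le_max (a := a) (b := b))),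
    max_sub_min_eq_abs, abs_sub_comm]

lemma lintegral_sq_diff_ind (a b : ℝ) :
    ∫⁻ t, ENNReal.ofReal ((ind a t - ind b t) ^ 2) = ENNReal.ofReal |a - b| := by
  have h : ∀ t, ENNReal.ofReal ((ind a t - ind b t) ^ 2)
      = (Set.Ico (min a b) (max a b)).indicator (fun _ => (1 : ℝ≥0∞)) t := by
    intro t
    rw [sq_diff_ind]
    by_cases ht : t ∈ Set.Ico (min a b) (max a b) <;> simp [ht]
  simp_rw [h]
  rw [lintegral_indicator measurableSet_Ico]
  simp [Real.volume_Ico, max_sub_min_eq_abs, abs_sub_comm]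

lemma ind_measurable_prod {Ω : Type*} [MeasurableSpace Ω] {Z : Ω → ℝ} (hZ : Measurable Z) :
    Measurable (fun p : Ω × ℝ => ind (Z p.1) p.2) := by
  unfold ind
  exact Measurable.ite (measurableSet_le (hZ.comp measurable_fst) measurable_snd)
    measurable_const measurable_const

lemma abs_ind_diff_le (a b t : ℝ) : (ind a t - ind b t) ^ 2 ≤ 1 := by
  unfold ind; split <;> split <;> norm_num

lemma key {Ω : Type*} [MeasurableSpace Ω] (P : Measure Ω) [IsProbabilityMeasure P]
    (Z W : Ω → ℝ) (hZ : Measurable Z) (hW : Measurable W)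
    (habs : Integrable (fun ω => |Z ω - W ω|) P) :
    Integrable (fun t => ∫ ω, (ind (Z ω) t - ind (W ω) t) ^ 2 ∂P) volume ∧
    (∫ t, (∫ ω, (ind (Z ω) t - ind (W ω) t) ^ 2 ∂P)) = ∫ ω, |Z ω - W ω| ∂P := by
  set f : Ω × ℝ → ℝ := fun p => (ind (Z p.1) p.2 - ind (W p.1) p.2) ^ 2 with hf
  have hfm : Measurable f := ((ind_measurable_prod hZ).sub (ind_measurable_prod hW)).pow_const 2
  have hf0 : ∀ p, 0 ≤ f p := fun p => sq_nonneg _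
  set G : ℝ → ℝ≥0∞ := fun t => ∫⁻ ω, ENNReal.ofReal (f (ω, t)) ∂P with hG
  have hGm : Measurable G := by
    apply Measurable.lintegral_prod_left
    exact (ENNReal.measurable_ofReal.comp hfm)
  have hGle : ∀ t, G t ≤ 1 := by
    intro t
    calc G t ≤ ∫⁻ _, 1 ∂P := lintegral_mono fun ω =>
            ENNReal.ofReal_le_one.mpr (abs_ind_diff_le (Z ω) (W ω) t)
      _ = 1 := by simp
  have hswap : (∫⁻ t, G t) = ENNReal.ofReal (∫ ω, |Z ω - W ω| ∂P) := by
    rw [hG]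
    have hmeas : AEMeasurable
        (Function.uncurry fun (t : ℝ) (ω : Ω) => ENNReal.ofReal (f (ω, t)))
        (volume.prod P) := by
      exact (((ENNReal.measurable_ofReal.comp hfm).comp measurable_swap).aemeasurable)
    rw [lintegral_lintegral_swap hmeas]
    have : ∀ ω, (∫⁻ t, ENNReal.ofReal (f (ω, t))) = ENNReal.ofReal |Z ω - W ω| := by
      intro ω; exact lintegral_sq_diff_ind (Z ω) (W ω)
    simp_rw [this]
    rw [← ofReal_integral_eq_lintegral_ofReal habs (Filter.Eventually.of_forall fun ω => abs_nonneg _)]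
  have hGlt : ∫⁻ t, G t < ⊤ := by
    rw [hswap]; exact ENNReal.ofReal_lt_top
  have hinner : ∀ t, (∫ ω, f (ω, t) ∂P) = (G t).toReal := by
    intro t
    rw [hG]
    rw [integral_eq_lintegral_of_nonneg_ae (Filter.Eventually.of_forall fun ω => hf0 (ω, t))
      ((hfm.comp (measurable_id.prodMk measurable_const)).aestronglyMeasurable)]
  have hGint : Integrable (fun t => (G t).toReal) volume :=
    integrable_toReal_of_lintegral_ne_top hGm.aemeasurable (by simpa using hGlt.ne)
  constructor
  · exact hGint.congr (Filter.Eventually.of_forall fun t => (hinner t).symm)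
  · calc (∫ t, (∫ ω, f (ω, t) ∂P)) = ∫ t, (G t).toReal := by simp_rw [hinner]
      _ = (∫⁻ t, G t).toReal := by
          rw [integral_toReal hGm.aemeasurable
            (Filter.Eventually.of_forall fun t => lt_of_le_of_lt (hGle t) (by norm_num))]
      _ = ∫ ω, |Z ω - W ω| ∂P := by
          rw [hswap, ENNReal.toReal_ofReal (integral_nonneg fun ω => abs_nonneg _)]

lemma integral_ind {Ω : Type*} [MeasurableSpace Ω] (P : Measure Ω) [IsProbabilityMeasure P]
    (Z : Ω → ℝ) (hZ : Measurable Z) (t : ℝ) :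
    ∫ ω, ind (Z ω) t ∂P = (P {ω | Z ω ≤ t}).toReal := by
  have h : (fun ω => ind (Z ω) t) = Set.indicator {ω | Z ω ≤ t} (fun _ => (1 : ℝ)) := by
    funext ω
    simp [ind, Set.indicator_apply, Set.mem_setOf_eq]
  rw [h, integral_indicator_const _ (measurableSet_le hZ measurable_const)]
  simp
  rfl

lemma integrable_ind {Ω : Type*} [MeasurableSpace Ω] (P : Measure Ω) [IsProbabilityMeasure P]
    (Z : Ω → ℝ) (hZ : Measurable Z) (t : ℝ) :
    Integrable (fun ω => ind (Z ω) t) P := by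
  have h : (fun ω => ind (Z ω) t) = Set.indicator {ω | Z ω ≤ t} (fun _ => (1 : ℝ)) := by
    funext ω; simp [ind, Set.indicator_apply, Set.mem_setOf_eq]
  rw [h]
  exact (integrable_const 1).indicator (measurableSet_le hZ measurable_const)

/-- The continuous ranked probability score can be written as
`CRPS(F,y) = E|Y − y| − ½ E|Y − Y'|` for `Y, Y'` i.i.d. with cdf `F` and finite
first moment. -/
theorem crps_decomposition {Ω : Type*} [MeasurableSpace Ω] (P : Measure Ω)
    [IsProbabilityMeasure P] (Y Y' : Ω → ℝ) (hY : Measurable Y) (hY' : Measurable Y')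
    (hindep : IndepFun Y Y' P) (hid : P.map Y = P.map Y') (hint : Integrable Y P)
    (y : ℝ) (F : ℝ → ℝ) (hF : F = fun t => (P {ω | Y ω ≤ t}).toReal) :
    (∫ t : ℝ, (F t - Set.indicator (Set.Ici y) (fun _ => (1 : ℝ)) t) ^ 2) =
      (∫ ω, |Y ω - y| ∂P) - (1 / 2) * ∫ ω, |Y ω - Y' ω| ∂P := by
  -- Y' has the same distribution as Y
  have hlaw : ∀ t : ℝ, P {ω | Y' ω ≤ t} = P {ω | Y ω ≤ t} := by
    intro t
    have h1 : P {ω | Y' ω ≤ t} = P.map Y' (Set.Iic t) := by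
      rw [Measure.map_apply hY' measurableSet_Iic]; rfl
    have h2 : P {ω | Y ω ≤ t} = P.map Y (Set.Iic t) := by
      rw [Measure.map_apply hY measurableSet_Iic]; rfl
    rw [h1, h2, hid]
  have hY'int : Integrable Y' P := by
    have h1 : Integrable id (P.map Y) := by
      rw [integrable_map_measure aestronglyMeasurable_id hY.aemeasurable]
      simpa using hint
    rw [hid] at h1
    have h2 := (integrable_map_measure aestronglyMeasurable_id hY'.aemeasurable).mp h1
    simpa using h2
  have habs1 : Integrable (fun ω => |Y ω - y|) P := (hint.sub (integrable_const y)).abs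
  have habs2 : Integrable (fun ω => |Y ω - Y' ω|) P := (hint.sub hY'int).abs
  obtain ⟨hI1int, hI1⟩ := key P Y (fun _ => y) hY measurable_const habs1
  obtain ⟨hI2int, hI2⟩ := key P Y Y' hY hY' habs2
  -- pointwise identity
  have hpt : ∀ t : ℝ, (F t - Set.indicator (Set.Ici y) (fun _ => (1 : ℝ)) t) ^ 2
      = (∫ ω, (ind (Y ω) t - ind ((fun _ => y) ω) t) ^ 2 ∂P)
        - (1 / 2) * (∫ ω, (ind (Y ω) t - ind (Y' ω) t) ^ 2 ∂P) := by
    intro t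
    set c : ℝ := ind y t with hc
    have hchi : Set.indicator (Set.Ici y) (fun _ => (1 : ℝ)) t = c := by
      simp [ind, Set.indicator_apply, Set.mem_Ici, hc]
    have hFt : F t = ∫ ω, ind (Y ω) t ∂P := by
      rw [hF, integral_ind P Y hY]
    have hF't : F t = ∫ ω, ind (Y' ω) t ∂P := by
      rw [integral_ind P Y' hY', hlaw t, hF]
    -- I1
    have e1 : (fun ω => (ind (Y ω) t - ind ((fun _ => y) ω) t) ^ 2)
        = fun ω => (1 - 2 * c) * ind (Y ω) t + c ^ 2 := by
      funext ω
      have := ind_sq (Y ω) t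
      simp only []
      nlinarith [ind_sq (Y ω) t]
    have hI1t : (∫ ω, (ind (Y ω) t - ind ((fun _ => y) ω) t) ^ 2 ∂P)
        = (1 - 2 * c) * F t + c ^ 2 := by
      rw [e1, integral_add ((integrable_ind P Y hY t).const_mul _) (integrable_const _),
        integral_const_mul, ← hFt]
      simp
    -- product of indicators
    have hprod : ∫ ω, ind (Y ω) t * ind (Y' ω) t ∂P = F t * F t := by
      have hset : (fun ω => ind (Y ω) t * ind (Y' ω) t)
          = Set.indicator (Y ⁻¹' Set.Iic t ∩ Y' ⁻¹' Set.Iic t) (fun _ => (1 : ℝ)) := by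
        funext ω
        by_cases h1 : Y ω ≤ t <;> by_cases h2 : Y' ω ≤ t <;>
          simp [ind, h1, h2, Set.indicator_apply, Set.mem_inter_iff, Set.mem_preimage,
            Set.mem_Iic]
      rw [hset, integral_indicator_const _
        (((hY measurableSet_Iic).inter (hY' measurableSet_Iic)))]
      rw [measureReal_def, hindep.measure_inter_preimage_eq_mul _ _ measurableSet_Iic measurableSet_Iic]
      have : P (Y ⁻¹' Set.Iic t) = P {ω | Y ω ≤ t} := rfl
      have h2 : P (Y' ⁻¹' Set.Iic t) = P {ω | Y ω ≤ t} := hlaw t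
      rw [this, h2, ENNReal.toReal_mul, hF]
      simp [mul_comm]
    have e2 : (fun ω => (ind (Y ω) t - ind (Y' ω) t) ^ 2)
        = fun ω => ind (Y ω) t + ind (Y' ω) t - 2 * (ind (Y ω) t * ind (Y' ω) t) := by
      funext ω
      nlinarith [ind_sq (Y ω) t, ind_sq (Y' ω) t]
    have hmul : Integrable (fun ω => ind (Y ω) t * ind (Y' ω) t) P := by
      apply (integrable_ind P Y' hY' t).bdd_mul
        (integrable_ind P Y hY t).aestronglyMeasurable
      refine Filter.Eventually.of_forall (fun ω => (?_ : ‖ind (Y ω) t‖ ≤ 1))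
      unfold ind; split <;> norm_num
    have hI2t : (∫ ω, (ind (Y ω) t - ind (Y' ω) t) ^ 2 ∂P)
        = F t + F t - 2 * (F t * F t) := by
      have hadd : Integrable (fun ω => ind (Y ω) t + ind (Y' ω) t) P :=
        (integrable_ind P Y hY t).add (integrable_ind P Y' hY' t)
      have hmul2 : Integrable (fun ω => 2 * (ind (Y ω) t * ind (Y' ω) t)) P :=
        hmul.const_mul 2
      rw [e2, integral_sub hadd hmul2]
      have haddi : ∫ ω, (ind (Y ω) t + ind (Y' ω) t) ∂P
          = (∫ ω, ind (Y ω) t ∂P) + ∫ ω, ind (Y' ω) t ∂P :=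
        integral_add (integrable_ind P Y hY t) (integrable_ind P Y' hY' t)
      rw [haddi, integral_const_mul, hprod, ← hFt, ← hF't]
    rw [hchi, hI1t, hI2t]
    ring
  calc (∫ t : ℝ, (F t - Set.indicator (Set.Ici y) (fun _ => (1 : ℝ)) t) ^ 2)
      = ∫ t : ℝ, ((∫ ω, (ind (Y ω) t - ind ((fun _ => y) ω) t) ^ 2 ∂P)
        - (1 / 2) * (∫ ω, (ind (Y ω) t - ind (Y' ω) t) ^ 2 ∂P)) := by
        exact integral_congr_ae (Filter.Eventually.of_forall hpt)
    _ = (∫ ω, |Y ω - y| ∂P) - (1 / 2) * ∫ ω, |Y ω - Y' ω| ∂P := by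
        rw [integral_sub hI1int (hI2int.const_mul _), integral_const_mul, hI1, hI2]
end
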